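/- If R_c ∈ (1.42, 1.43) and x_c > 0 satisfy f_{R_c}(x_c) = 0 and f'_{R_c}(x_c) = 0, then for every R with 0 < R < R_c the cubic f_R has no roots in (0, ∞); consequently for such R the only equilibrium of the vegetation–water system with x₁ ≥ 0 is the bare state SN1 = (0, R). -/

import Mathlib

/-- Drift of the vegetation–water system with ρ = 1, K = 10, β = 3, x₀ = 1, α = 1, λ = 0.12. -/
noncomputable def bVW (R : ℝ) (p : ℝ × ℝ) : ℝ × ℝ :=
  (p.1 * (p.2 - p.1 / 10) - 3 * p.1 / (p.1 + 1),
   R - p.2 - 0.12 * p.1 * p.2)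

/-- The cubic whose positive roots give the nontrivial equilibria. -/
noncomputable def fR (R x : ℝ) : ℝ :=
  0.12 * x ^ 3 + 1.12 * x ^ 2 + (4.6 - 10 * R) * x + (30 - 10 * R)

lemma fR_hasDerivAt (R x : ℝ) :
    HasDerivAt (fR R) (0.36 * x ^ 2 + 2.24 * x + (4.6 - 10 * R)) x := by
  have h : HasDerivAt (fun x : ℝ =>
      0.12 * x ^ 3 + 1.12 * x ^ 2 + (4.6 - 10 * R) * x + (30 - 10 * R))
      (0.12 * (3 * x ^ 2) + 1.12 * (2 * x ^ 1) + (4.6 - 10 * R) * 1 + 0) x := by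
    exact ((((hasDerivAt_pow 3 x).const_mul 0.12).add
      ((hasDerivAt_pow 2 x).const_mul 1.12)).add
      ((hasDerivAt_id x).const_mul (4.6 - 10 * R))).add (hasDerivAt_const x _)
  convert h using 1
  · rfl
  · ring

/-- If R_c ∈ (1.42, 1.43) and x_c > 0 give a double root of f_{R_c}, then for 0 < R < R_c the
cubic f_R has no positive roots, so the only equilibrium with x₁ ≥ 0 is the bare state
SN1 = (0, R). -/
theorem bare_state_below_Rc (Rc xc : ℝ)
    (hRc : Rc ∈ Set.Ioo (1.42 : ℝ) 1.43) (hxc : 0 < xc)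
    (hroot : fR Rc xc = 0) (hderiv : deriv (fR Rc) xc = 0) :
    ∀ R : ℝ, 0 < R → R < Rc →
      (∀ x : ℝ, 0 < x → fR R x ≠ 0) ∧
      {p : ℝ × ℝ | 0 ≤ p.1 ∧ bVW R p = (0, 0)} = {((0 : ℝ), R)} := by
  have hd := (fR_hasDerivAt Rc xc).deriv
  rw [hderiv] at hd
  -- coefficient relations forced by the double root
  have hc : (4.6 : ℝ) - 10 * Rc = -0.36 * xc ^ 2 - 2.24 * xc := by linarith [hd.symm]
  have h30 : (30 : ℝ) - 10 * Rc = 0.24 * xc ^ 3 + 1.12 * xc ^ 2 := by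
    have := hroot
    unfold fR at this
    nlinarith [this, hc]
  intro R hR hRRc
  have hnoroot : ∀ x : ℝ, 0 < x → fR R x ≠ 0 := by
    intro x hx hzero
    unfold fR at hzero
    -- fR R x = 0.12 (x - xc)^2 (x + 2xc + 28/3) + 10 (Rc - R)(x+1) > 0
    nlinarith [sq_nonneg (x - xc), mul_pos hx hxc, hc, h30,
      mul_nonneg (sq_nonneg (x - xc)) (le_of_lt hx),
      mul_nonneg (sq_nonneg (x - xc)) (le_of_lt hxc),
      mul_pos (sub_pos.mpr hRRc) (by linarith : (0:ℝ) < x + 1)]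
  refine ⟨hnoroot, ?_⟩
  ext p
  simp only [Set.mem_setOf_eq, Set.mem_singleton_iff, bVW, Prod.mk.injEq, Prod.ext_iff]
  constructor
  · rintro ⟨hp1, h1, h2⟩
    rcases eq_or_lt_of_le hp1 with h0 | h0
    · constructor
      · exact h0.symm
      · rw [← h0] at h2; simp at h2; linarith
    · exfalso
      have hne : p.1 + 1 ≠ 0 := by positivity
      have h1' : (p.2 - p.1 / 10) * (p.1 + 1) = 3 := by
        have h1'' : p.1 * ((p.2 - p.1 / 10) * (p.1 + 1)) = p.1 * 3 := by
          field_simp at h1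
          nlinarith [h1]
        exact mul_left_cancel₀ (ne_of_gt h0) h1''
      apply hnoroot p.1 h0
      unfold fR
      linear_combination (-10 * (p.1 + 1)) * h2 + (-10 - 1.2 * p.1) * h1'
  · rintro ⟨hp1, hp2⟩
    simp [hp1, hp2]
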